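/- It is possible to partition the real line ℝ into four subsets A, B, C, D such that A ⊔ g(B) = ℝ and C ⊔ h(D) = ℝ (disjoint unions), where g and h are measure-preserving bijections of ℝ of the form x ↦ σ(⌊x⌋) + (x - ⌊x⌋) for permutations σ of ℤ. -/

import Mathlib

/-- The piecewise rigid extension of a permutation of ℤ to ℝ. -/
noncomputable def pwr (σ : Equiv.Perm ℤ) : ℝ → ℝ :=
  fun x => (σ ⌊x⌋ : ℝ) + (x - ⌊x⌋)

open MeasureTheory Set

lemma pwr_floor (σ : Equiv.Perm ℤ) (x : ℝ) : ⌊pwr σ x⌋ = σ ⌊x⌋ := by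
  have h1 : (0:ℝ) ≤ x - ⌊x⌋ := by linarith [Int.floor_le x]
  have h2 : x - ⌊x⌋ < 1 := by linarith [Int.lt_floor_add_one x]
  rw [pwr, Int.floor_eq_iff]
  constructor <;> push_cast <;> linarith

lemma pwr_leftinv (σ : Equiv.Perm ℤ) (x : ℝ) : pwr σ⁻¹ (pwr σ x) = x := by
  have h := pwr_floor σ x
  simp only [pwr] at *
  rw [h]
  simp

lemma pwr_bijective (σ : Equiv.Perm ℤ) : Function.Bijective (pwr σ) := by
  have hr : ∀ y, pwr σ (pwr σ⁻¹ y) = y := by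
    intro y
    have := pwr_leftinv σ⁻¹ y
    rwa [inv_inv] at this
  exact ⟨Function.LeftInverse.injective (pwr_leftinv σ),
    Function.RightInverse.surjective hr⟩

lemma pwr_measurable (σ : Equiv.Perm ℤ) : Measurable (pwr σ) := by
  have h : Measurable fun x : ℝ => ((σ ⌊x⌋ : ℤ) : ℝ) :=
    (measurable_from_top (f := fun n : ℤ => ((σ n : ℤ) : ℝ))).comp Int.measurable_floor
  have h2 : Measurable fun x : ℝ => ((⌊x⌋ : ℤ) : ℝ) :=
    (measurable_from_top (f := fun n : ℤ => ((n : ℤ) : ℝ))).comp Int.measurable_floor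
  exact h.add (measurable_id.sub h2)

lemma floor_eq_of_Ico {n : ℤ} {x : ℝ} (hx : x ∈ Ico (n:ℝ) (n+1)) : ⌊x⌋ = n := by
  rw [Int.floor_eq_iff]
  exact ⟨hx.1, by push_cast; exact hx.2⟩

lemma pwr_piece (σ : Equiv.Perm ℤ) (s : Set ℝ) (n : ℤ) :
    pwr σ ⁻¹' s ∩ Ico (n:ℝ) (n+1)
      = (fun x => x + ((σ n : ℝ) - n)) ⁻¹' (s ∩ Ico (σ n : ℝ) (σ n + 1)) := by
  ext x
  simp only [mem_inter_iff, mem_preimage, mem_Ico]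
  constructor
  · rintro ⟨hs, hx⟩
    have hf : ⌊x⌋ = n := floor_eq_of_Ico ⟨hx.1, hx.2⟩
    have : pwr σ x = x + ((σ n : ℝ) - n) := by simp [pwr, hf]; ring
    rw [← this]
    refine ⟨hs, ?_, ?_⟩ <;> [linarith [hx.1]; linarith [hx.2]]
  · rintro ⟨hs, h1, h2⟩
    have hx1 : (n:ℝ) ≤ x := by linarith
    have hx2 : x < n + 1 := by linarith
    have hf : ⌊x⌋ = n := floor_eq_of_Ico ⟨hx1, hx2⟩
    have : pwr σ x = x + ((σ n : ℝ) - n) := by simp [pwr, hf]; ring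
    rw [this]
    exact ⟨hs, hx1, hx2⟩

lemma volume_eq_tsum (t : Set ℝ) (ht : MeasurableSet t) :
    volume t = ∑' n : ℤ, volume (t ∩ Ico (n:ℝ) (n+1)) := by
  have heq : t = ⋃ n : ℤ, t ∩ Ico (n:ℝ) (n+1) := by
    rw [← inter_iUnion, iUnion_Ico_intCast, inter_univ]
  conv_lhs => rw [heq]
  refine measure_iUnion ?_ fun n => ht.inter measurableSet_Ico
  intro m n hmn
  refine Set.disjoint_left.mpr fun x hx hx' => hmn ?_
  have h1 : ⌊x⌋ = m := floor_eq_of_Ico hx.2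
  have h2 : ⌊x⌋ = n := floor_eq_of_Ico hx'.2
  omega

lemma pwr_measurePreserving (σ : Equiv.Perm ℤ) :
    MeasurePreserving (pwr σ) volume volume := by
  refine ⟨pwr_measurable σ, ?_⟩
  refine Measure.ext fun s hs => ?_
  rw [Measure.map_apply (pwr_measurable σ) hs]
  rw [volume_eq_tsum _ (pwr_measurable σ hs), volume_eq_tsum s hs,
    ← Equiv.tsum_eq σ (fun m : ℤ => volume (s ∩ Ico (m:ℝ) (m+1)))]
  refine tsum_congr fun n => ?_
  rw [pwr_piece σ s n]
  exact measure_preimage_add_right volume _ _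

/-- blocks of reals by floor index set -/
def IB (S : Set ℤ) : Set ℝ := {x : ℝ | ⌊x⌋ ∈ S}

lemma pwr_image (σ : Equiv.Perm ℤ) (S : Set ℤ) : pwr σ '' IB S = IB (⇑σ '' S) := by
  ext y
  constructor
  · rintro ⟨x, hx, rfl⟩
    exact ⟨⌊x⌋, hx, (pwr_floor σ x).symm⟩
  · rintro ⟨n, hn, hny⟩
    refine ⟨pwr σ⁻¹ y, ?_, ?_⟩
    · have : ⌊pwr σ⁻¹ y⌋ = σ⁻¹ ⌊y⌋ := pwr_floor σ⁻¹ y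
      have h2 : σ⁻¹ ⌊y⌋ = n := by rw [← hny]; simp
      simpa [IB, this, h2] using hn
    · have := pwr_leftinv σ⁻¹ y
      rwa [inv_inv] at this

lemma IB_disjoint {S T : Set ℤ} (h : Disjoint S T) : Disjoint (IB S) (IB T) :=
  Set.disjoint_left.mpr fun x hx hx' => Set.disjoint_left.mp h hx hx'

lemma exists_perm_image (P Q : Set ℤ) (hP : P.Infinite) (hQ : Q.Infinite)
    (hPc : Pᶜ.Infinite) (hQc : Qᶜ.Infinite) : ∃ σ : Equiv.Perm ℤ, ⇑σ '' P = Q := by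
  classical
  haveI := hP.to_subtype
  haveI := hQ.to_subtype
  haveI := hPc.to_subtype
  haveI := hQc.to_subtype
  obtain ⟨e1⟩ : Nonempty (P ≃ Q) := nonempty_equiv_of_countable
  obtain ⟨e2⟩ : Nonempty ((↥Pᶜ) ≃ (↥Qᶜ)) := nonempty_equiv_of_countable
  let e2' : {x : ℤ // ¬ x ∈ P} ≃ {x : ℤ // ¬ x ∈ Q} :=
    (Equiv.subtypeEquivRight fun x => (Set.mem_compl_iff P x).symm).trans
      (e2.trans (Equiv.subtypeEquivRight fun x => Set.mem_compl_iff Q x))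
  refine ⟨(Equiv.sumCompl (· ∈ P)).symm.trans ((e1.sumCongr e2').trans
    (Equiv.sumCompl (· ∈ Q))), ?_⟩
  set σ := (Equiv.sumCompl (· ∈ P)).symm.trans ((e1.sumCongr e2').trans
    (Equiv.sumCompl (· ∈ Q))) with hσ
  have hmem : ∀ x, x ∈ P → σ x ∈ Q := by
    intro x hx
    simp only [hσ, Equiv.trans_apply, Equiv.sumCompl_symm_apply_of_pos hx,
      Equiv.sumCongr_apply, Sum.map_inl, Equiv.sumCompl_apply_inl]
    exact (e1 ⟨x, hx⟩).2
  have hmem' : ∀ x, x ∉ P → σ x ∉ Q := by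
    intro x hx
    simp only [hσ, Equiv.trans_apply, Equiv.sumCompl_symm_apply_of_neg hx,
      Equiv.sumCongr_apply, Sum.map_inr, Equiv.sumCompl_apply_inr]
    exact (e2' ⟨x, hx⟩).2
  apply Set.eq_of_subset_of_subset
  · rintro _ ⟨x, hx, rfl⟩; exact hmem x hx
  · intro q hq
    by_cases hx : σ.symm q ∈ P
    · exact ⟨σ.symm q, hx, σ.apply_symm_apply q⟩
    · exact absurd (by have := hmem' _ hx; rwa [σ.apply_symm_apply] at this : q ∉ Q)
        (not_not.mpr hq)

theorem real_line_paradoxical_decomposition :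
    ∃ (A B C D : Set ℝ) (σ τ : Equiv.Perm ℤ),
      (A ∪ B ∪ C ∪ D = Set.univ) ∧
      ([A, B, C, D] : List (Set ℝ)).Pairwise Disjoint ∧
      MeasureTheory.MeasurePreserving (pwr σ) MeasureTheory.volume MeasureTheory.volume ∧
      MeasureTheory.MeasurePreserving (pwr τ) MeasureTheory.volume MeasureTheory.volume ∧
      Function.Bijective (pwr σ) ∧ Function.Bijective (pwr τ) ∧
      Disjoint A (pwr σ '' B) ∧ A ∪ pwr σ '' B = Set.univ ∧
      Disjoint C (pwr τ '' D) ∧ C ∪ pwr τ '' D = Set.univ := by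
  set S : Set ℤ := {n : ℤ | n % 4 = 0} with hSdef
  set T : Set ℤ := {n : ℤ | n % 4 = 1} with hTdef
  set U : Set ℤ := {n : ℤ | n % 4 = 2} with hUdef
  set V : Set ℤ := {n : ℤ | n % 4 = 3} with hVdef
  have hS : S.Infinite := Set.infinite_of_injective_forall_mem
    (f := fun k : ℤ => 4 * k) (fun a b h => by simp only [] at h; omega)
    (fun a => show (4 * a) % 4 = 0 by omega)
  have hT : T.Infinite := Set.infinite_of_injective_forall_mem
    (f := fun k : ℤ => 4 * k + 1) (fun a b h => by simp only [] at h; omega)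
    (fun a => show (4 * a + 1) % 4 = 1 by omega)
  have hU : U.Infinite := Set.infinite_of_injective_forall_mem
    (f := fun k : ℤ => 4 * k + 2) (fun a b h => by simp only [] at h; omega)
    (fun a => show (4 * a + 2) % 4 = 2 by omega)
  have hV : V.Infinite := Set.infinite_of_injective_forall_mem
    (f := fun k : ℤ => 4 * k + 3) (fun a b h => by simp only [] at h; omega)
    (fun a => show (4 * a + 3) % 4 = 3 by omega)
  have hSc : Sᶜ.Infinite := hT.mono (fun n hn => show ¬ (n % 4 = 0 : Prop) from by
    have : n % 4 = 1 := hn; omega)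
  have hTc : Tᶜ.Infinite := hS.mono (fun n hn => show ¬ (n % 4 = 1 : Prop) from by
    have : n % 4 = 0 := hn; omega)
  have hUc : Uᶜ.Infinite := hS.mono (fun n hn => show ¬ (n % 4 = 2 : Prop) from by
    have : n % 4 = 0 := hn; omega)
  have hVc : Vᶜ.Infinite := hS.mono (fun n hn => show ¬ (n % 4 = 3 : Prop) from by
    have : n % 4 = 0 := hn; omega)
  obtain ⟨σ, hσ⟩ := exists_perm_image T Sᶜ hT hSc hTc (by rwa [compl_compl])
  obtain ⟨τ, hτ⟩ := exists_perm_image V Uᶜ hV hUc hVc (by rwa [compl_compl])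
  refine ⟨IB S, IB T, IB U, IB V, σ, τ, ?_, ?_, pwr_measurePreserving σ,
    pwr_measurePreserving τ, pwr_bijective σ, pwr_bijective τ, ?_, ?_, ?_, ?_⟩
  · ext x
    simp only [IB, Set.mem_union, Set.mem_setOf_eq, Set.mem_univ, iff_true, hSdef, hTdef,
      hUdef, hVdef]
    omega
  · have d : ∀ P Q : Set ℤ, (∀ n, n ∈ P → n ∈ Q → False) → Disjoint (IB P) (IB Q) :=
      fun P Q h => IB_disjoint (Set.disjoint_left.mpr fun n h1 h2 => h n h1 h2)
    refine List.Pairwise.cons ?_ (List.Pairwise.cons ?_ (List.Pairwise.cons ?_ (List.Pairwise.cons (fun s hs => absurd hs (List.not_mem_nil (a := s))) List.Pairwise.nil)))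
    · intro s hs
      simp only [List.mem_cons, List.not_mem_nil, or_false] at hs
      rcases hs with rfl | rfl | rfl <;>
        exact d _ _ fun n h1 h2 => by
          simp only [hSdef, hTdef, hUdef, hVdef, Set.mem_setOf_eq] at h1 h2; omega
    · intro s hs
      simp only [List.mem_cons, List.not_mem_nil, or_false] at hs
      rcases hs with rfl | rfl <;>
        exact d _ _ fun n h1 h2 => by
          simp only [hSdef, hTdef, hUdef, hVdef, Set.mem_setOf_eq] at h1 h2; omega
    · intro s hs
      simp only [List.mem_cons, List.not_mem_nil, or_false] at hs
      rcases hs with rfl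
      exact d _ _ fun n h1 h2 => by
        simp only [hSdef, hUdef, hVdef, Set.mem_setOf_eq] at h1 h2; omega
  · rw [pwr_image, hσ]
    exact IB_disjoint disjoint_compl_right
  · rw [pwr_image, hσ]
    ext x
    simp only [IB, Set.mem_union, Set.mem_setOf_eq, Set.mem_compl_iff, Set.mem_univ, iff_true]
    tauto
  · rw [pwr_image, hτ]
    exact IB_disjoint disjoint_compl_right
  · rw [pwr_image, hτ]
    ext x
    simp only [IB, Set.mem_union, Set.mem_setOf_eq, Set.mem_compl_iff, Set.mem_univ, iff_true]
    tauto
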